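/- (Theorem 3.3) There exists β̄ > 0 such that for every β ≥ β̄ the following two inclusions hold: (i) every z ∈ S_β^opt all of whose blocks are extreme points of the corresponding Ω_i^+ belongs to S^opt; (ii) S^opt ⊆ S_β^opt. -/

import Mathlib

noncomputable section

/-- Dot product on `ℝ^m`. -/
def dotp {m : ℕ} (x y : Fin m → ℝ) : ℝ := ∑ k, x k * y k

/-- The ℓ₁ penalty term `p(z) = Σ_{i<j} ⟨x_i, x_j⟩`. -/
def pen {n m : ℕ} (z : Fin n → Fin m → ℝ) : ℝ :=
  ∑ i : Fin n, ∑ j : Fin n, if i < j then dotp (z i) (z j) else 0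

/-- `f` is multi-affine: affine in each block when the others are fixed. -/
def MultiAffine {n m : ℕ} (f : (Fin n → Fin m → ℝ) → ℝ) : Prop :=
  ∀ (i : Fin n) (z : Fin n → Fin m → ℝ) (x y : Fin m → ℝ) (t : ℝ),
    f (Function.update z i (t • x + (1 - t) • y)) =
      t * f (Function.update z i x) + (1 - t) * f (Function.update z i y)

/-- Membership in `Ω = Ω₁⁺ × ⋯ × Ωₙ⁺`. -/
def InOmega {n m : ℕ} (Om : Fin n → Set (Fin m → ℝ)) (z : Fin n → Fin m → ℝ) : Prop :=
  ∀ i, z i ∈ Om i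

/-- Feasibility for (P): `z ∈ Ω` and `⟨x_i, x_j⟩ = 0` for all `i ≠ j`. -/
def Feas {n m : ℕ} (Om : Fin n → Set (Fin m → ℝ)) (z : Fin n → Fin m → ℝ) : Prop :=
  InOmega Om z ∧ ∀ i j, i ≠ j → dotp (z i) (z j) = 0

/-- `S^opt`: global minimizers of `f` over the feasible region of (P). -/
def SOpt {n m : ℕ} (Om : Fin n → Set (Fin m → ℝ)) (f : (Fin n → Fin m → ℝ) → ℝ) :
    Set (Fin n → Fin m → ℝ) :=
  {z | Feas Om z ∧ ∀ w, Feas Om w → f z ≤ f w}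

/-- `S_β^opt`: global minimizers of `f_β = f + β p` over `Ω`. -/
def SBeta {n m : ℕ} (Om : Fin n → Set (Fin m → ℝ)) (f : (Fin n → Fin m → ℝ) → ℝ) (β : ℝ) :
    Set (Fin n → Fin m → ℝ) :=
  {z | InOmega Om z ∧ ∀ w, InOmega Om w → f z + β * pen z ≤ f w + β * pen w}

lemma dotp_comm {m : ℕ} (x y : Fin m → ℝ) : dotp x y = dotp y x := by
  simp [dotp, mul_comm]

lemma dotp_nonneg {m : ℕ} {x y : Fin m → ℝ} (hx : ∀ k, 0 ≤ x k) (hy : ∀ k, 0 ≤ y k) :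
    0 ≤ dotp x y :=
  Finset.sum_nonneg fun k _ => mul_nonneg (hx k) (hy k)

lemma dotp_comb_left {m : ℕ} (x y w : Fin m → ℝ) (t : ℝ) :
    dotp (t • x + (1 - t) • y) w = t * dotp x w + (1 - t) * dotp y w := by
  simp only [dotp, Finset.mul_sum, ← Finset.sum_add_distrib]
  refine Finset.sum_congr rfl fun k _ => ?_
  simp [Pi.add_apply, Pi.smul_apply, smul_eq_mul]
  ring

lemma dotp_comb_right {m : ℕ} (x y w : Fin m → ℝ) (t : ℝ) :
    dotp w (t • x + (1 - t) • y) = t * dotp w x + (1 - t) * dotp w y := by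
  rw [dotp_comm, dotp_comb_left, dotp_comm x w, dotp_comm y w]

lemma dotp_continuous {m : ℕ} : Continuous fun p : (Fin m → ℝ) × (Fin m → ℝ) => dotp p.1 p.2 := by
  unfold dotp
  exact continuous_finset_sum _ fun k _ =>
    ((continuous_apply k).comp continuous_fst).mul ((continuous_apply k).comp continuous_snd)

lemma pen_continuous {n m : ℕ} : Continuous (pen (n := n) (m := m)) := by
  unfold pen
  refine continuous_finset_sum _ fun i _ => continuous_finset_sum _ fun j _ => ?_
  by_cases h : i < j
  · simp only [if_pos h]
    have h1 : Continuous fun z : Fin n → Fin m → ℝ => z i := continuous_apply i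
    have h2 : Continuous fun z : Fin n → Fin m → ℝ => z j := continuous_apply j
    exact dotp_continuous.comp (h1.prodMk h2)
  · simp only [if_neg h]
    exact continuous_const

lemma pen_update {n m : ℕ} (z : Fin n → Fin m → ℝ) (i : Fin n) (x y : Fin m → ℝ) (t : ℝ) :
    pen (Function.update z i (t • x + (1 - t) • y)) =
      t * pen (Function.update z i x) + (1 - t) * pen (Function.update z i y) := by
  unfold pen
  rw [Finset.mul_sum, Finset.mul_sum, ← Finset.sum_add_distrib]
  refine Finset.sum_congr rfl fun a _ => ?_
  rw [Finset.mul_sum, Finset.mul_sum, ← Finset.sum_add_distrib]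
  refine Finset.sum_congr rfl fun b _ => ?_
  by_cases hab : a < b
  · simp only [hab, if_true]
    rcases eq_or_ne a i with rfl | ha
    · have hb : b ≠ a := (ne_of_gt hab)
      simp [Function.update_self, Function.update_of_ne hb, dotp_comb_left]
    · rcases eq_or_ne b i with rfl | hb
      · simp [Function.update_self, Function.update_of_ne ha, dotp_comb_right]
      · simp [Function.update_of_ne ha, Function.update_of_ne hb]; ring
  · simp [hab]

lemma pen_nonneg {n m : ℕ} {Om : Fin n → Set (Fin m → ℝ)}
    (hnonneg : ∀ i, ∀ x ∈ Om i, ∀ k, 0 ≤ x k)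
    {z : Fin n → Fin m → ℝ} (hz : ∀ i, z i ∈ Om i) : 0 ≤ pen z := by
  refine Finset.sum_nonneg fun i _ => Finset.sum_nonneg fun j _ => ?_
  by_cases h : i < j
  · simpa [h] using dotp_nonneg (hnonneg i _ (hz i)) (hnonneg j _ (hz j))
  · simp [h]

lemma pen_eq_zero_of_feas {n m : ℕ} {z : Fin n → Fin m → ℝ}
    (h : ∀ i j, i ≠ j → dotp (z i) (z j) = 0) : pen z = 0 := by
  refine Finset.sum_eq_zero fun i _ => Finset.sum_eq_zero fun j _ => ?_
  by_cases hij : i < j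
  · simp [hij, h i j (ne_of_lt hij)]
  · simp [hij]

lemma feas_of_pen_eq_zero {n m : ℕ} {Om : Fin n → Set (Fin m → ℝ)}
    (hnonneg : ∀ i, ∀ x ∈ Om i, ∀ k, 0 ≤ x k)
    {z : Fin n → Fin m → ℝ} (hz : ∀ i, z i ∈ Om i) (hp : pen z = 0) :
    ∀ i j, i ≠ j → dotp (z i) (z j) = 0 := by
  have hterm : ∀ i j : Fin n, 0 ≤ if i < j then dotp (z i) (z j) else 0 := by
    intro i j
    by_cases h : i < j
    · simpa [h] using dotp_nonneg (hnonneg i _ (hz i)) (hnonneg j _ (hz j))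
    · simp [h]
  have h1 : ∀ i ∈ Finset.univ, (∑ j : Fin n, if i < j then dotp (z i) (z j) else 0) = 0 := by
    rw [← Finset.sum_eq_zero_iff_of_nonneg
      (fun i _ => Finset.sum_nonneg fun j _ => hterm i j)]
    exact hp
  have h2 : ∀ i j : Fin n, (if i < j then dotp (z i) (z j) else 0) = 0 := by
    intro i j
    have := (Finset.sum_eq_zero_iff_of_nonneg (fun j _ => hterm i j)).1
      (h1 i (Finset.mem_univ i)) j (Finset.mem_univ j)
    exact this
  intro i j hij
  rcases lt_or_gt_of_ne hij with h | h
  · simpa [h] using h2 i j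
  · rw [dotp_comm]; simpa [h] using h2 j i

lemma exists_extreme_le {n m : ℕ} (Om : Fin n → Set (Fin m → ℝ))
    (hcpt : ∀ i, IsCompact (Om i)) (hcvx : ∀ i, Convex ℝ (Om i))
    (hfin : ∀ i, (Set.extremePoints ℝ (Om i)).Finite)
    (F : (Fin n → Fin m → ℝ) → ℝ)
    (hF : ∀ (i : Fin n) (z : Fin n → Fin m → ℝ) (x y : Fin m → ℝ) (t : ℝ),
      F (Function.update z i (t • x + (1 - t) • y)) =
      t * F (Function.update z i x) + (1 - t) * F (Function.update z i y))
    (w : Fin n → Fin m → ℝ) (hw : ∀ i, w i ∈ Om i) :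
    ∃ e, (∀ i, e i ∈ Set.extremePoints ℝ (Om i)) ∧ F e ≤ F w := by
  have hrep : ∀ i, Om i = convexHull ℝ (Set.extremePoints ℝ (Om i)) := by
    intro i
    have h := closure_convexHull_extremePoints (hcpt i) (hcvx i)
    rw [IsClosed.closure_eq (((hfin i).isCompact_convexHull ℝ).isClosed)] at h
    exact h.symm
  have main : ∀ k : ℕ, k ≤ n → ∃ e, (∀ i, e i ∈ Om i) ∧
      (∀ i : Fin n, (i : ℕ) < k → e i ∈ Set.extremePoints ℝ (Om i)) ∧ F e ≤ F w := by
    intro k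
    induction k with
    | zero => exact fun _ => ⟨w, hw, fun i h => absurd h (Nat.not_lt_zero _), le_refl _⟩
    | succ k ih =>
      intro hk
      obtain ⟨e, heΩ, hex, hle⟩ := ih (Nat.le_of_succ_le hk)
      set i : Fin n := ⟨k, hk⟩ with hi
      have hconc : ConcaveOn ℝ Set.univ (fun x => F (Function.update e i x)) := by
        refine ⟨convex_univ, ?_⟩
        intro x _ y _ a b ha hb hab
        have hb' : b = 1 - a := by linarith
        subst hb'
        simpa using (hF i e x y a).ge
      have hmem : e i ∈ convexHull ℝ (Set.extremePoints ℝ (Om i)) := by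
        rw [← hrep i]; exact heΩ i
      obtain ⟨x, hx, hxle⟩ := hconc.exists_le_of_mem_convexHull (Set.subset_univ _) hmem
      refine ⟨Function.update e i x, ?_, ?_, ?_⟩
      · intro j
        rcases eq_or_ne j i with rfl | hj
        · simpa using extremePoints_subset hx
        · simpa [Function.update_of_ne hj] using heΩ j
      · intro j hjk
        rcases eq_or_ne j i with rfl | hj
        · simpa using hx
        · have hjk' : (j : ℕ) < k := by
            rcases Nat.lt_succ_iff_lt_or_eq.1 hjk with h | h
            · exact h
            · exact absurd (Fin.ext h) hj
          simpa [Function.update_of_ne hj] using hex j hjk'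
      · have h1 : F (Function.update e i x) ≤ F e := by
          simpa [Function.update_eq_self] using hxle
        exact h1.trans hle
  obtain ⟨e, _, hex, hle⟩ := main n le_rfl
  exact ⟨e, fun i => hex i i.isLt, hle⟩

theorem main_thm (n m : ℕ) (hn : 2 ≤ n) (hm : 1 ≤ m)
    (Om : Fin n → Set (Fin m → ℝ))
    (hne : ∀ i, (Om i).Nonempty) (hcpt : ∀ i, IsCompact (Om i))
    (hcvx : ∀ i, Convex ℝ (Om i))
    (hnonneg : ∀ i, ∀ x ∈ Om i, ∀ k, 0 ≤ x k)
    (hfin : ∀ i, (Set.extremePoints ℝ (Om i)).Finite)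
    (f : (Fin n → Fin m → ℝ) → ℝ)
    (hf : ∀ (i : Fin n) (z : Fin n → Fin m → ℝ) (x y : Fin m → ℝ) (t : ℝ),
      f (Function.update z i (t • x + (1 - t) • y)) =
      t * f (Function.update z i x) + (1 - t) * f (Function.update z i y))
    (hfc : Continuous f)
    (hFne : ∃ z, Feas Om z) :
    ∃ βbar : ℝ, 0 < βbar ∧ ∀ β ≥ βbar,
      (∀ z, (InOmega Om z ∧ ∀ w, InOmega Om w → f z + β * pen z ≤ f w + β * pen w) →
        (∀ i, z i ∈ Set.extremePoints ℝ (Om i)) →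
        (Feas Om z ∧ ∀ w, Feas Om w → f z ≤ f w)) ∧
      (∀ z, (Feas Om z ∧ ∀ w, Feas Om w → f z ≤ f w) →
        (InOmega Om z ∧ ∀ w, InOmega Om w → f z + β * pen z ≤ f w + β * pen w)) := by
  classical
  -- the feasible set is compact and nonempty, so f attains its min there
  have hFeasSet : {z : Fin n → Fin m → ℝ | Feas Om z} = Set.univ.pi Om ∩ pen ⁻¹' {0} := by
    ext z
    constructor
    · rintro ⟨hΩ, hd⟩
      exact ⟨fun i _ => hΩ i, pen_eq_zero_of_feas hd⟩
    · rintro ⟨hΩ, hp⟩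
      have hΩ' : ∀ i, z i ∈ Om i := fun i => hΩ i (Set.mem_univ i)
      exact ⟨hΩ', feas_of_pen_eq_zero hnonneg hΩ' hp⟩
  have hKF : IsCompact {z : Fin n → Fin m → ℝ | Feas Om z} := by
    rw [hFeasSet]
    exact (isCompact_univ_pi hcpt).inter_right (isClosed_singleton.preimage pen_continuous)
  obtain ⟨z0, hz0⟩ := hFne
  obtain ⟨zs, hzs, hzsmin'⟩ := hKF.exists_isMinOn ⟨z0, hz0⟩ hfc.continuousOn
  have hzsmin : ∀ w, Feas Om w → f zs ≤ f w := fun w hw => hzsmin' hw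
  have hzsF : Feas Om zs := hzs
  have hzspen : pen zs = 0 := pen_eq_zero_of_feas hzsF.2
  -- finite set of extreme profiles
  have hEfin : {z : Fin n → Fin m → ℝ | ∀ i, z i ∈ Set.extremePoints ℝ (Om i)}.Finite := by
    have : {z : Fin n → Fin m → ℝ | ∀ i, z i ∈ Set.extremePoints ℝ (Om i)} =
        Set.univ.pi (fun i => Set.extremePoints ℝ (Om i)) := by
      ext z; simp [Set.mem_univ_pi]
    rw [this]
    exact Set.Finite.pi hfin
  -- bound for the ratios
  obtain ⟨C0, hC0⟩ := ((hEfin.inter_of_left {z | 0 < pen z}).image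
    (fun e => (f zs - f e) / pen e)).bddAbove
  set βbar : ℝ := max 1 (C0 + 1) with hβbar
  have hβbar1 : (1 : ℝ) ≤ βbar := le_max_left _ _
  have key : ∀ e, (∀ i, e i ∈ Set.extremePoints ℝ (Om i)) → 0 < pen e →
      ∀ β, βbar ≤ β → f zs < f e + β * pen e := by
    intro e hex hpe β hβ
    have h1 : (f zs - f e) / pen e ≤ C0 :=
      hC0 ⟨e, ⟨hex, hpe⟩, rfl⟩
    have h2 : (f zs - f e) / pen e < β := by
      have : C0 + 1 ≤ β := le_trans (le_max_right 1 (C0 + 1)) hβ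
      linarith
    have h3 : f zs - f e < β * pen e := (div_lt_iff₀ hpe).1 h2
    linarith
  refine ⟨βbar, lt_of_lt_of_le one_pos hβbar1, fun β hβ => ?_⟩
  -- multi-affinity of f + β * pen
  have hFb : ∀ (i : Fin n) (z : Fin n → Fin m → ℝ) (x y : Fin m → ℝ) (t : ℝ),
      (f (Function.update z i (t • x + (1 - t) • y)) +
        β * pen (Function.update z i (t • x + (1 - t) • y))) =
      t * (f (Function.update z i x) + β * pen (Function.update z i x)) +
      (1 - t) * (f (Function.update z i y) + β * pen (Function.update z i y)) := by
    intro i z x y t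
    rw [hf, pen_update]
    ring
  constructor
  · -- (i)
    rintro z ⟨hzΩ, hzmin⟩ hzex
    have hzpen : 0 ≤ pen z := pen_nonneg hnonneg hzΩ
    rcases lt_or_eq_of_le hzpen with hpos | h0
    · exfalso
      have hle := hzmin zs hzsF.1
      have hkey := key z hzex hpos β hβ
      rw [hzspen] at hle
      linarith
    · have hzF : Feas Om z := ⟨hzΩ, feas_of_pen_eq_zero hnonneg hzΩ h0.symm⟩
      refine ⟨hzF, fun w hw => ?_⟩
      have hle := hzmin w hw.1
      have hwpen : pen w = 0 := pen_eq_zero_of_feas hw.2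
      rw [hwpen, ← h0] at hle
      linarith
  · -- (ii)
    rintro zo ⟨hzoF, hzomin⟩
    refine ⟨hzoF.1, fun w hw => ?_⟩
    have hzopen : pen zo = 0 := pen_eq_zero_of_feas hzoF.2
    obtain ⟨e, hex, hle⟩ := exists_extreme_le Om hcpt hcvx hfin
      (fun z => f z + β * pen z) hFb w hw
    have hle' : f e + β * pen e ≤ f w + β * pen w := hle
    have heΩ : ∀ i, e i ∈ Om i := fun i => extremePoints_subset (hex i)
    have hpe : 0 ≤ pen e := pen_nonneg hnonneg heΩ
    rcases lt_or_eq_of_le hpe with hpos | h0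
    · have hkey := key e hex hpos β hβ
      have hzole : f zo ≤ f zs := hzomin zs hzsF
      rw [hzopen]
      linarith
    · have heF : Feas Om e := ⟨heΩ, feas_of_pen_eq_zero hnonneg heΩ h0.symm⟩
      have h1 := hzomin e heF
      have h2 : pen e = 0 := h0.symm
      rw [h2] at hle'
      rw [hzopen]
      linarith

/-- **Theorem 3.3** (partial exactness). There exists `β̄ > 0` such that for all
`β ≥ β̄`: (i) every extreme-point optimal solution of (P_β) is optimal for (P);
(ii) `S^opt ⊆ S_β^opt`. -/
theorem partial_exact_penalty (n m : ℕ) (hn : 2 ≤ n) (hm : 1 ≤ m)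
    (Om : Fin n → Set (Fin m → ℝ))
    (hne : ∀ i, (Om i).Nonempty) (hcpt : ∀ i, IsCompact (Om i))
    (hcvx : ∀ i, Convex ℝ (Om i))
    (hnonneg : ∀ i, ∀ x ∈ Om i, ∀ k, 0 ≤ x k)
    (hfin : ∀ i, (Set.extremePoints ℝ (Om i)).Finite)
    (f : (Fin n → Fin m → ℝ) → ℝ) (hf : MultiAffine f) (hfc : Continuous f)
    (hFne : ∃ z, Feas Om z) :
    ∃ βbar : ℝ, 0 < βbar ∧ ∀ β ≥ βbar,
      (∀ z ∈ SBeta Om f β, (∀ i, z i ∈ Set.extremePoints ℝ (Om i)) → z ∈ SOpt Om f) ∧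
      SOpt Om f ⊆ SBeta Om f β := by
  obtain ⟨βbar, hpos, h⟩ := main_thm n m hn hm Om hne hcpt hcvx hnonneg hfin f hf hfc hFne
  exact ⟨βbar, hpos, fun β hβ =>
    ⟨fun z hz hex => (h β hβ).1 z hz hex, fun z hz => (h β hβ).2 z hz⟩⟩
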